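/- arXiv:2112.07785 — 5 statements merged into one kernel-verified Lean document; each statement's English description precedes it below -/
import Mathlib

section
/- Let A be a p×p real symmetric matrix with nonnegative entries, and let u, v ∈ ℝ^p with all entries strictly positive. Then −(1/2) uᵀAu ≤ −(1/2) ∑_{i,j} A_{ij} v_i v_j (1 + log(u_i u_j / (v_i v_j))). -/
theorem stmt_2 (p : ℕ) (A : Matrix (Fin p) (Fin p) ℝ)
    (hsym : A.IsSymm) (hA : ∀ i j, 0 ≤ A i j)
    (u v : Fin p → ℝ) (hu : ∀ i, 0 < u i) (hv : ∀ i, 0 < v i) :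
    -(1/2) * ∑ i, ∑ j, A i j * u i * u j ≤
      -(1/2) * ∑ i, ∑ j, A i j * v i * v j * (1 + Real.log (u i * u j / (v i * v j))) := by
  have key : ∑ i, ∑ j, A i j * v i * v j * (1 + Real.log (u i * u j / (v i * v j))) ≤
      ∑ i, ∑ j, A i j * u i * u j := by
    refine Finset.sum_le_sum fun i _ => Finset.sum_le_sum fun j _ => ?_
    have hvv : 0 < v i * v j := mul_pos (hv i) (hv j)
    have hx : 0 < u i * u j / (v i * v j) := div_pos (mul_pos (hu i) (hu j)) hvv
    have hl : Real.log (u i * u j / (v i * v j)) ≤ u i * u j / (v i * v j) - 1 :=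
      Real.log_le_sub_one_of_pos hx
    have h2 : v i * v j * (1 + Real.log (u i * u j / (v i * v j))) ≤ u i * u j := by
      have := mul_le_mul_of_nonneg_left hl hvv.le
      have hfield : v i * v j * (u i * u j / (v i * v j) - 1) = u i * u j - v i * v j := by
        rw [mul_sub, mul_div_assoc', mul_div_cancel_left₀ _ hvv.ne', mul_one]
      nlinarith [this, hfield]
    calc A i j * v i * v j * (1 + Real.log (u i * u j / (v i * v j)))
        = A i j * (v i * v j * (1 + Real.log (u i * u j / (v i * v j)))) := by ring
      _ ≤ A i j * (u i * u j) := mul_le_mul_of_nonneg_left h2 (hA i j)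
      _ = A i j * u i * u j := by ring
  linarith
end

section
/- Fix reals a > 0, c ≥ 0, b ∈ ℝ, d ≥ 0, v⁰ ≥ 0, and v > 0. Define r₁ = v·(−(b+d) + √((b+d)² + 4ac))/(2a) and r₂ = v·(−(b−d) + √((b−d)² + 4ac))/(2a). Then the conditions r₁ > v⁰ and r₂ < v⁰ cannot hold simultaneously. -/
lemma aux_anti (x y k : ℝ) (hk : 0 ≤ k) (hxy : x ≤ y) :
    -y + Real.sqrt (y^2 + k) ≤ -x + Real.sqrt (x^2 + k) := by
  set s1 := Real.sqrt (x^2 + k) with hs1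
  set s2 := Real.sqrt (y^2 + k) with hs2
  have h1 : s1^2 = x^2 + k := Real.sq_sqrt (by positivity)
  have h2 : s2^2 = y^2 + k := Real.sq_sqrt (by positivity)
  have h3 : 0 ≤ s1 := Real.sqrt_nonneg _
  have h4 : 0 ≤ s2 := Real.sqrt_nonneg _
  have h5 : x ≤ s1 := by nlinarith [sq_nonneg (s1 - x), sq_nonneg (s1 + x)]
  have h6 : y ≤ s2 := by nlinarith [sq_nonneg (s2 - y), sq_nonneg (s2 + y)]
  nlinarith [mul_nonneg (sub_nonneg.2 hxy) (sub_nonneg.2 h5), sq_nonneg (s1 - s2)]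

theorem stmt_5 (a b c d v0 v : ℝ) (ha : 0 < a) (hc : 0 ≤ c) (hd : 0 ≤ d)
    (hv0 : 0 ≤ v0) (hv : 0 < v)
    (r1 r2 : ℝ)
    (hr1 : r1 = v * (-(b+d) + Real.sqrt ((b+d)^2 + 4*a*c)) / (2*a))
    (hr2 : r2 = v * (-(b-d) + Real.sqrt ((b-d)^2 + 4*a*c)) / (2*a)) :
    ¬(r1 > v0 ∧ r2 < v0) := by
  rintro ⟨h1, h2⟩
  have key := aux_anti (b - d) (b + d) (4*a*c) (by positivity) (by linarith)
  have hle : r1 ≤ r2 := by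
    rw [hr1, hr2]
    apply div_le_div_of_nonneg_right ?_ (by linarith) |>.trans_eq rfl
    · exact mul_le_mul_of_nonneg_left key hv.le
  linarith
end

section
/- Fix reals a > 0, c ≥ 0, b ∈ ℝ, d ≥ 0, v⁰ ≥ 0, ℓ > 0, and v > 0. Define G(u) = (1/2) a u²/v − c v log(u/v) + b u + d|u − v⁰| for u ∈ (0, ℓ]. Let r₁ = v(−(b+d)+√((b+d)²+4ac))/(2a) and r₂ = v(−(b−d)+√((b−d)²+4ac))/(2a). Then the unique minimizer of G over (0, ℓ] equals min{r₁, ℓ} if r₁ > v⁰, equals min{r₂, ℓ} if r₂ < v⁰, and equals min{v⁰, ℓ} otherwise (assuming c > 0 or the formal minimizer is positive). -/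
lemma branch_aux (a c v e r : ℝ) (ha : 0 < a) (hc : 0 < c) (hv : 0 < v)
    (hr : r = v * (-e + Real.sqrt (e^2 + 4*a*c)) / (2*a)) :
    0 < r ∧
      StrictAntiOn (fun u : ℝ => (1/2) * a * u^2 / v - c * v * Real.log (u / v) + e * u)
        (Set.Ioc 0 r) ∧
      StrictMonoOn (fun u : ℝ => (1/2) * a * u^2 / v - c * v * Real.log (u / v) + e * u)
        (Set.Ici r) := by
  set F : ℝ → ℝ := fun u : ℝ => (1/2) * a * u^2 / v - c * v * Real.log (u / v) + e * u with hF
  set s := Real.sqrt (e^2 + 4*a*c) with hs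
  have hs2 : s^2 = e^2 + 4*a*c := Real.sq_sqrt (by positivity)
  have hsnn : 0 ≤ s := Real.sqrt_nonneg _
  have hes : e < s := by nlinarith [mul_pos ha hc]
  have hrpos : 0 < r := by
    rw [hr]
    apply div_pos (mul_pos hv (by linarith)) (by linarith)
  have hroot : a * r^2 + e * v * r = c * v^2 := by
    rw [hr]
    field_simp
    linear_combination hs2
  have hderiv : ∀ u : ℝ, 0 < u →
      HasDerivAt F ((a * u^2 + e * v * u - c * v^2) / (v * u)) u := by
    intro u hu
    have h1 : HasDerivAt (fun u : ℝ => (1/2) * a * u^2 / v) (a * u / v) u := by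
      have h := (hasDerivAt_pow 2 u).const_mul ((1/2) * a / v)
      have heq : (fun u : ℝ => (1/2) * a * u^2 / v) = fun u : ℝ => ((1/2) * a / v) * u^2 := by
        funext x; ring
      rw [heq]
      refine h.congr_deriv ?_
      push_cast; field_simp
    have h2 : HasDerivAt (fun u : ℝ => Real.log (u / v)) (1 / u) u := by
      have hdiv : HasDerivAt (fun u : ℝ => u / v) (1 / v) u := by
        simpa using (hasDerivAt_id u).div_const v
      have := (Real.hasDerivAt_log (div_ne_zero hu.ne' hv.ne')).comp u hdiv
      refine this.congr_deriv ?_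
      field_simp
    have h3 : HasDerivAt (fun u : ℝ => e * u) e u := by
      simpa using (hasDerivAt_id u).const_mul e
    have := ((h1.sub (h2.const_mul (c * v))).add h3)
    refine this.congr_deriv ?_
    field_simp
    ring
  have hcont : ∀ x : ℝ, 0 < x → ContinuousAt F x := fun x hx => (hderiv x hx).continuousAt
  refine ⟨hrpos, ?_, ?_⟩
  · apply strictAntiOn_of_deriv_neg (convex_Ioc 0 r)
    · exact fun x hx => (hcont x hx.1).continuousWithinAt
    · intro x hx
      rw [interior_Ioc] at hx
      rw [(hderiv x hx.1).deriv]
      apply div_neg_of_neg_of_pos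
      · have hfac : (0:ℝ) < a*x*r + c*v^2 := by
          nlinarith [mul_pos (mul_pos ha hx.1) hrpos, mul_pos hc (pow_pos hv 2)]
        have hid : r * (a * x^2 + e * v * x - c * v^2) = (x - r) * (a*x*r + c*v^2) := by
          linear_combination x * hroot
        have h2 : r * (a * x^2 + e * v * x - c * v^2) < 0 := by
          rw [hid]; exact mul_neg_of_neg_of_pos (by linarith [hx.2]) hfac
        nlinarith [h2]
      · exact mul_pos hv hx.1
  · apply strictMonoOn_of_deriv_pos (convex_Ici r)
    · exact fun x hx => (hcont x (lt_of_lt_of_le hrpos hx)).continuousWithinAt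
    · intro x hx
      rw [interior_Ici] at hx
      have hxpos : 0 < x := lt_trans hrpos hx
      rw [(hderiv x hxpos).deriv]
      apply div_pos
      · have hfac : (0:ℝ) < a*x*r + c*v^2 := by
          nlinarith [mul_pos (mul_pos ha hxpos) hrpos, mul_pos hc (pow_pos hv 2)]
        have hid : r * (a * x^2 + e * v * x - c * v^2) = (x - r) * (a*x*r + c*v^2) := by
          linear_combination x * hroot
        have h2 : 0 < r * (a * x^2 + e * v * x - c * v^2) := by
          rw [hid]; exact mul_pos (by linarith [Set.mem_Ioi.1 hx]) hfac
        nlinarith [h2]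
      · exact mul_pos hv hxpos
theorem stmt_6 (a b c d v0 l v : ℝ) (ha : 0 < a) (hc : 0 < c) (hd : 0 ≤ d)
    (hv0 : 0 ≤ v0) (hl : 0 < l) (hv : 0 < v)
    (G : ℝ → ℝ)
    (hG : ∀ u, G u = (1/2) * a * u^2 / v - c * v * Real.log (u / v) + b * u + d * |u - v0|)
    (r1 r2 : ℝ)
    (hr1 : r1 = v * (-(b+d) + Real.sqrt ((b+d)^2 + 4*a*c)) / (2*a))
    (hr2 : r2 = v * (-(b-d) + Real.sqrt ((b-d)^2 + 4*a*c)) / (2*a))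
    (m : ℝ)
    (hm : m = if r1 > v0 then min r1 l else if r2 < v0 then min r2 l else min v0 l) :
    m ∈ Set.Ioc 0 l ∧ IsMinOn G (Set.Ioc 0 l) m ∧
      ∀ u ∈ Set.Ioc (0:ℝ) l, IsMinOn G (Set.Ioc 0 l) u → u = m := by
  obtain ⟨hr1pos, hanti1, hmono1⟩ := branch_aux a c v (b+d) r1 ha hc hv hr1
  obtain ⟨hr2pos, hanti2, hmono2⟩ := branch_aux a c v (b-d) r2 ha hc hv hr2
  -- r1 ≤ r2
  have hr12 : r1 ≤ r2 := by
    set s2 := Real.sqrt ((b-d)^2 + 4*a*c) with hs2def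
    have hs2sq : s2^2 = (b-d)^2 + 4*a*c := Real.sq_sqrt (by positivity)
    have hs2nn : 0 ≤ s2 := Real.sqrt_nonneg _
    have hbd : b - d ≤ s2 := by
      calc b - d ≤ |b - d| := le_abs_self _
        _ = Real.sqrt ((b-d)^2) := (Real.sqrt_sq_eq_abs _).symm
        _ ≤ s2 := Real.sqrt_le_sqrt (by nlinarith [mul_pos ha hc])
    have key : Real.sqrt ((b+d)^2 + 4*a*c) ≤ s2 + 2*d := by
      have h1 : (b+d)^2 + 4*a*c ≤ (s2 + 2*d)^2 := by
        nlinarith [mul_nonneg hd (show (0:ℝ) ≤ s2 - (b - d) by linarith)]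
      calc Real.sqrt ((b+d)^2 + 4*a*c) ≤ Real.sqrt ((s2 + 2*d)^2) := Real.sqrt_le_sqrt h1
        _ = s2 + 2*d := Real.sqrt_sq (by linarith)
    rw [hr1, hr2]
    have h2a : (0:ℝ) < 2*a := by linarith
    apply (div_le_div_iff_of_pos_right h2a).mpr
    apply mul_le_mul_of_nonneg_left ?_ hv.le
    linarith [key]
  -- relation between G and the branches
  have hGp : ∀ u, v0 ≤ u →
      G u = ((1/2) * a * u^2 / v - c * v * Real.log (u / v) + (b+d) * u) - d * v0 := by
    intro u hu
    rw [hG, abs_of_nonneg (by linarith)]; ring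
  have hGm : ∀ u, u ≤ v0 →
      G u = ((1/2) * a * u^2 / v - c * v * Real.log (u / v) + (b-d) * u) + d * v0 := by
    intro u hu
    rw [hG, abs_of_nonpos (by linarith)]; ring
  -- main case analysis
  have main : ∃ m0 : ℝ, m = min m0 l ∧ 0 < m0 ∧
      (∀ x y, 0 < x → x < y → y ≤ m0 → G y < G x) ∧
      (∀ x y, m0 ≤ x → x < y → G x < G y) := by
    by_cases h1 : r1 > v0
    · refine ⟨r1, by rw [hm, if_pos h1], hr1pos, ?_, ?_⟩
      · intro x y hx hxy hy
        rcases le_or_gt y v0 with hyv | hyv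
        · rw [hGm x (by linarith), hGm y hyv]
          have := hanti2 ⟨hx, by linarith⟩ ⟨by linarith, by linarith⟩ hxy
          simp only at this; linarith
        · rcases le_or_gt v0 x with hxv | hxv
          · rw [hGp x hxv, hGp y (by linarith)]
            have := hanti1 ⟨hx, by linarith⟩ ⟨by linarith, hy⟩ hxy
            simp only at this; linarith
          · have hva : G v0 < G x := by
              rw [hGm x hxv.le, hGm v0 le_rfl]
              have := hanti2 ⟨hx, by linarith⟩ ⟨by linarith, by linarith⟩ hxv
              simp only at this; linarith
            have hvb : G y < G v0 := by
              rw [hGp v0 le_rfl, hGp y hyv.le]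
              have := hanti1 ⟨by linarith, by linarith⟩ ⟨by linarith, hy⟩ hyv
              simp only at this; linarith
            linarith
      · intro x y hx hxy
        rw [hGp x (by linarith), hGp y (by linarith)]
        have := hmono1 (Set.mem_Ici.mpr hx) (Set.mem_Ici.mpr (by linarith)) hxy
        simp only at this; linarith
    · by_cases h2 : r2 < v0
      · refine ⟨r2, by rw [hm, if_neg h1, if_pos h2], hr2pos, ?_, ?_⟩
        · intro x y hx hxy hy
          rw [hGm x (by linarith), hGm y (by linarith)]
          have := hanti2 ⟨hx, by linarith⟩ ⟨by linarith, hy⟩ hxy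
          simp only at this; linarith
        · intro x y hx hxy
          rcases le_or_gt y v0 with hyv | hyv
          · rw [hGm x (by linarith), hGm y hyv]
            have := hmono2 (Set.mem_Ici.mpr hx) (Set.mem_Ici.mpr (by linarith)) hxy
            simp only at this; linarith
          · rcases le_or_gt v0 x with hxv | hxv
            · rw [hGp x hxv, hGp y (by linarith)]
              have := hmono1 (Set.mem_Ici.mpr (by linarith)) (Set.mem_Ici.mpr (by linarith)) hxy
              simp only at this; linarith
            · have hva : G x < G v0 := by
                rw [hGm x hxv.le, hGm v0 le_rfl]
                have := hmono2 (Set.mem_Ici.mpr hx) (Set.mem_Ici.mpr (by linarith)) hxv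
                simp only at this; linarith
              have hvb : G v0 < G y := by
                rw [hGp v0 le_rfl, hGp y hyv.le]
                have := hmono1 (Set.mem_Ici.mpr (by linarith)) (Set.mem_Ici.mpr (by linarith)) hyv
                simp only at this; linarith
              linarith
      · push_neg at h1 h2
        refine ⟨v0, by rw [hm, if_neg (not_lt.mpr h1), if_neg (not_lt.mpr h2)], by linarith, ?_, ?_⟩
        · intro x y hx hxy hy
          rw [hGm x (by linarith), hGm y hy]
          have := hanti2 ⟨hx, by linarith⟩ ⟨by linarith, by linarith⟩ hxy
          simp only at this; linarith
        · intro x y hx hxy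
          rw [hGp x hx, hGp y (by linarith)]
          have := hmono1 (Set.mem_Ici.mpr (by linarith)) (Set.mem_Ici.mpr (by linarith)) hxy
          simp only at this; linarith
  obtain ⟨m0, hmeq, hm0, key1, key2⟩ := main
  have hm_mem : m ∈ Set.Ioc 0 l := by
    rw [hmeq]; exact ⟨lt_min hm0 hl, min_le_right _ _⟩
  have hstrict : ∀ u ∈ Set.Ioc (0:ℝ) l, u ≠ m → G m < G u := by
    intro u hu hne
    rcases lt_or_gt_of_ne hne with h | h
    · exact key1 u m hu.1 h (hmeq ▸ min_le_left _ _)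
    · have hml : m < l := lt_of_lt_of_le h hu.2
      have hmm0 : m = m0 := by
        rw [hmeq] at hml ⊢
        rcases min_lt_iff.mp hml with h' | h'
        · exact min_eq_left h'.le
        · exact absurd h' (lt_irrefl l)
      exact key2 m u (le_of_eq hmm0.symm) h
  refine ⟨hm_mem, ?_, ?_⟩
  · apply isMinOn_iff.mpr
    intro u hu
    by_cases h : u = m
    · rw [h]
    · exact (hstrict u hu h).le
  · intro u hu humin
    by_contra hne
    have h1 := hstrict u hu hne
    have h2 := isMinOn_iff.mp humin m hm_mem
    linarith
end

section
/- Let A be a real symmetric positive semidefinite p×p matrix with A = A⁺ − A⁻ (entrywise positive and negative parts), b, d, v⁰ ∈ ℝ^p with d, v⁰ nonnegative entrywise, ℓ ∈ ℝ^p with positive entries. Define F(u) = (1/2) uᵀAu + bᵀu + dᵀ|u − v⁰| and G(u, v) = (1/2) ∑_{i,j} (A⁺_{ij} u_i² v_j / v_i − A⁻_{ij} v_i v_j (1 + log(u_i u_j/(v_i v_j)))) + ∑_i (b_i u_i + d_i |u_i − v⁰_i|). Then G(v, v) = F(v) for all strictly positive v, and F(u) ≤ G(u, v) for all strictly positive u,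 v ∈ [0, ℓ]. -/
theorem stmt_9 (p : ℕ) (A : Matrix (Fin p) (Fin p) ℝ) (hA : A.PosSemidef)
    (b d v0 l : Fin p → ℝ) (hd : ∀ i, 0 ≤ d i) (hv0 : ∀ i, 0 ≤ v0 i)
    (hl : ∀ i, 0 < l i)
    (F : (Fin p → ℝ) → ℝ)
    (hF : ∀ u, F u = (1/2) * (∑ i, ∑ j, u i * A i j * u j)
      + ∑ i, b i * u i + ∑ i, d i * |u i - v0 i|)
    (G : (Fin p → ℝ) → (Fin p → ℝ) → ℝ)
    (hG : ∀ u v, G u v =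
      (1/2) * (∑ i, ∑ j,
        (max 0 (A i j) * (u i)^2 * v j / v i
          - max 0 (-(A i j)) * v i * v j * (1 + Real.log (u i * u j / (v i * v j)))))
      + ∑ i, (b i * u i + d i * |u i - v0 i|)) :
    (∀ v : Fin p → ℝ, (∀ i, 0 < v i) → G v v = F v) ∧
    (∀ u v : Fin p → ℝ, (∀ i, 0 < u i ∧ u i ≤ l i) → (∀ i, 0 < v i ∧ v i ≤ l i) →
      F u ≤ G u v) := by
  have hsym : ∀ i j, A i j = A j i := by
    intro i j
    have := hA.isHermitian.apply j i
    simpa using this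
  have hm : ∀ x : ℝ, max 0 x - max 0 (-x) = x := by
    intro x
    rcases le_total x 0 with h | h
    · rw [max_eq_left h, max_eq_right (by linarith)]; ring
    · rw [max_eq_right h, max_eq_left (by linarith)]; ring
  constructor
  · intro v hv
    rw [hG, hF, Finset.sum_add_distrib]
    have : ∀ i ∈ Finset.univ, ∀ j ∈ Finset.univ,
        max 0 (A i j) * (v i)^2 * v j / v i
          - max 0 (-(A i j)) * v i * v j * (1 + Real.log (v i * v j / (v i * v j)))
        = v i * A i j * v j := by
      intro i _ j _
      have hvi : (v i) ≠ 0 := ne_of_gt (hv i)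
      have hvj : (v j) ≠ 0 := ne_of_gt (hv j)
      rw [div_self (mul_ne_zero hvi hvj), Real.log_one]
      have e1 : max 0 (A i j) * (v i)^2 * v j / v i = max 0 (A i j) * (v i * v j) := by
        field_simp
      rw [e1]
      linear_combination (v i * v j) * hm (A i j)
    rw [Finset.sum_congr rfl (fun i hi => Finset.sum_congr rfl (this i hi))]
    ring
  · intro u v hu hv
    rw [hF, hG, Finset.sum_add_distrib]
    have key : (∑ i, ∑ j, u i * A i j * u j)
        ≤ ∑ i, ∑ j, (max 0 (A i j) * (u i)^2 * v j / v i
          - max 0 (-(A i j)) * v i * v j * (1 + Real.log (u i * u j / (v i * v j)))) := by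
      have split : (∑ i, ∑ j, u i * A i j * u j)
          = (∑ i, ∑ j, max 0 (A i j) * (u i * u j))
            - ∑ i, ∑ j, max 0 (-(A i j)) * (u i * u j) := by
        rw [← Finset.sum_sub_distrib]
        refine Finset.sum_congr rfl fun i _ => ?_
        rw [← Finset.sum_sub_distrib]
        refine Finset.sum_congr rfl fun j _ => ?_
        linear_combination (-(u i * u j)) * hm (A i j)
      have splitG : (∑ i, ∑ j, (max 0 (A i j) * (u i)^2 * v j / v i
          - max 0 (-(A i j)) * v i * v j * (1 + Real.log (u i * u j / (v i * v j)))))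
          = (∑ i, ∑ j, max 0 (A i j) * (u i)^2 * v j / v i)
            - ∑ i, ∑ j, max 0 (-(A i j)) * v i * v j * (1 + Real.log (u i * u j / (v i * v j))) := by
        rw [← Finset.sum_sub_distrib]
        exact Finset.sum_congr rfl fun i _ => Finset.sum_sub_distrib _ _
      rw [split, splitG]
      have h1 : (∑ i, ∑ j, max 0 (A i j) * (u i * u j))
          ≤ ∑ i, ∑ j, max 0 (A i j) * (u i)^2 * v j / v i := by
        have hswap : (∑ i, ∑ j, max 0 (A i j) * (u i)^2 * v j / v i)
            = ∑ i, ∑ j, max 0 (A i j) * (u j)^2 * v i / v j := by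
          rw [Finset.sum_comm]
          refine Finset.sum_congr rfl fun i _ => Finset.sum_congr rfl fun j _ => ?_
          rw [hsym i j]
        have h2 : (∑ i, ∑ j, (2:ℝ) * (max 0 (A i j) * (u i * u j)))
            ≤ ∑ i, ∑ j, (max 0 (A i j) * (u i)^2 * v j / v i
              + max 0 (A i j) * (u j)^2 * v i / v j) := by
          refine Finset.sum_le_sum fun i _ => Finset.sum_le_sum fun j _ => ?_
          have hui := (hu i).1; have huj := (hu j).1
          have hvi := (hv i).1; have hvj := (hv j).1
          have hid : (u i)^2 * v j / v i + (u j)^2 * v i / v j - 2 * (u i * u j)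
              = (u i * v j - u j * v i)^2 / (v i * v j) := by
            field_simp; ring
          have hnn : 0 ≤ (u i * v j - u j * v i)^2 / (v i * v j) := by positivity
          have hma : (0:ℝ) ≤ max 0 (A i j) := le_max_left _ _
          rw [← hid] at hnn
          have hkey : 2 * (u i * u j) ≤ (u i)^2 * v j / v i + (u j)^2 * v i / v j := by
            linarith
          calc 2 * (max 0 (A i j) * (u i * u j))
              = max 0 (A i j) * (2 * (u i * u j)) := by ring
            _ ≤ max 0 (A i j) * ((u i)^2 * v j / v i + (u j)^2 * v i / v j) :=
                mul_le_mul_of_nonneg_left hkey hma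
            _ = max 0 (A i j) * (u i)^2 * v j / v i + max 0 (A i j) * (u j)^2 * v i / v j := by
                ring
        have hh : (2:ℝ) * (∑ i, ∑ j, max 0 (A i j) * (u i * u j))
            ≤ 2 * ∑ i, ∑ j, max 0 (A i j) * (u i)^2 * v j / v i := by
          calc (2:ℝ) * (∑ i, ∑ j, max 0 (A i j) * (u i * u j))
              = ∑ i, ∑ j, (2:ℝ) * (max 0 (A i j) * (u i * u j)) := by
                rw [Finset.mul_sum]; exact Finset.sum_congr rfl fun i _ => Finset.mul_sum _ _ _
            _ ≤ ∑ i, ∑ j, (max 0 (A i j) * (u i)^2 * v j / v i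
                  + max 0 (A i j) * (u j)^2 * v i / v j) := h2
            _ = (∑ i, ∑ j, max 0 (A i j) * (u i)^2 * v j / v i)
                  + ∑ i, ∑ j, max 0 (A i j) * (u j)^2 * v i / v j := by
                rw [← Finset.sum_add_distrib]
                exact Finset.sum_congr rfl fun i _ => Finset.sum_add_distrib
            _ = 2 * ∑ i, ∑ j, max 0 (A i j) * (u i)^2 * v j / v i := by
                rw [← hswap]; ring
        linarith
      have h2 : (∑ i, ∑ j, max 0 (-(A i j)) * v i * v j * (1 + Real.log (u i * u j / (v i * v j))))
          ≤ ∑ i, ∑ j, max 0 (-(A i j)) * (u i * u j) := by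
        refine Finset.sum_le_sum fun i _ => Finset.sum_le_sum fun j _ => ?_
        have hui := (hu i).1; have huj := (hu j).1
        have hvi := (hv i).1; have hvj := (hv j).1
        have hx : (0:ℝ) < u i * u j / (v i * v j) := by positivity
        have hlog : Real.log (u i * u j / (v i * v j)) ≤ u i * u j / (v i * v j) - 1 :=
          Real.log_le_sub_one_of_pos hx
        have hcore : v i * v j * (1 + Real.log (u i * u j / (v i * v j))) ≤ u i * u j := by
          have : v i * v j * (u i * u j / (v i * v j)) = u i * u j := by
            field_simp
          nlinarith [mul_le_mul_of_nonneg_left (by linarith : 1 + Real.log (u i * u j / (v i * v j)) ≤ u i * u j / (v i * v j)) (le_of_lt (mul_pos hvi hvj))]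
        have hma : (0:ℝ) ≤ max 0 (-(A i j)) := le_max_left _ _
        calc max 0 (-(A i j)) * v i * v j * (1 + Real.log (u i * u j / (v i * v j)))
            = max 0 (-(A i j)) * (v i * v j * (1 + Real.log (u i * u j / (v i * v j)))) := by ring
          _ ≤ max 0 (-(A i j)) * (u i * u j) := mul_le_mul_of_nonneg_left hcore hma
      linarith
    linarith
end

section
/- With the substitutions X̃ = √(2n)/√(1+λ₂) · stacked matrix (X·diag(w)⁻¹ ; √λ₂ Σ^{1/2} diag(w)⁻¹), Ỹ = (√(2n)Y ; 0), β̃* = √(1+λ₂) diag(w) β*, λ = λ₁/√(1+λ₂), and Ĩ = ∏_i [√(1+λ₂) w_i s_i, √(1+λ₂) w_i t_i], the ARGEN problem argmin_{β ∈ [s,t]} (‖Y − Xβ‖₂² + λ₁ wᵀ|β| + λ₂ βᵀΣβ) and the rectangle-range lasso argmin_{γ ∈ Ĩ} ((1/(2n))‖Ỹ − X̃γ‖₂² + λ‖γ‖₁) are equivalent: β̂ solves the former if and only if γ̂ = √(1+λ₂) diag(w) β̂ solves the latter. -/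
open Matrix

theorem stmt_18 (n p : ℕ) (hn : 0 < n)
    (X : Matrix (Fin n) (Fin p) ℝ) (Y : Fin n → ℝ)
    (lam1 lam2 : ℝ) (hlam1 : 0 < lam1) (hlam2 : 0 ≤ lam2)
    (w : Fin p → ℝ) (hw : ∀ i, 0 < w i)
    (Sig R : Matrix (Fin p) (Fin p) ℝ) (hSig : Sig.PosSemidef)
    (hRsym : R.IsSymm) (hRR : R * R = Sig)
    (s t : Fin p → ℝ) (hst : ∀ i, s i < t i)
    (f : (Fin p → ℝ) → ℝ)
    (hf : ∀ β, f β = (∑ j, (Y j - (X.mulVec β) j)^2)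
      + lam1 * ∑ i, w i * |β i| + lam2 * ∑ i, β i * (Sig.mulVec β) i)
    (Xt : Matrix (Fin n ⊕ Fin p) (Fin p) ℝ)
    (hXt : Xt = (Real.sqrt (2 * n) / Real.sqrt (1 + lam2)) •
      Matrix.fromRows (X * (Matrix.diagonal w)⁻¹)
        (Real.sqrt lam2 • (R * (Matrix.diagonal w)⁻¹)))
    (Yt : Fin n ⊕ Fin p → ℝ)
    (hYt : Yt = Sum.elim (fun j => Real.sqrt (2 * n) * Y j) 0)
    (lam : ℝ) (hlam : lam = lam1 / Real.sqrt (1 + lam2))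
    (L : (Fin p → ℝ) → ℝ)
    (hL : ∀ γ, L γ = (1 / (2 * (n : ℝ))) * (∑ i, (Yt i - (Xt.mulVec γ) i)^2)
      + lam * ∑ i, |γ i|)
    (S : Set (Fin p → ℝ)) (hS : S = {β | ∀ i, β i ∈ Set.Icc (s i) (t i)})
    (St : Set (Fin p → ℝ))
    (hSt : St = {γ | ∀ i, γ i ∈ Set.Icc (Real.sqrt (1 + lam2) * w i * s i)
      (Real.sqrt (1 + lam2) * w i * t i)}) :
    ∀ βhat ∈ S,
      (IsMinOn f S βhat ↔
        IsMinOn L St (fun i => Real.sqrt (1 + lam2) * w i * βhat i)) := by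
  have h1l : (0:ℝ) < 1 + lam2 := by linarith
  set a : ℝ := Real.sqrt (1 + lam2) with ha_def
  have ha : 0 < a := Real.sqrt_pos.mpr h1l
  have ha2 : a ^ 2 = 1 + lam2 := Real.sq_sqrt h1l.le
  have h2n : (0:ℝ) < 2 * n := by positivity
  have hs2n : Real.sqrt (2 * n) ^ 2 = 2 * n := Real.sq_sqrt h2n.le
  have hDinv : (Matrix.diagonal w)⁻¹ = Matrix.diagonal (fun i => (w i)⁻¹) := by
    apply Matrix.inv_eq_right_inv
    rw [Matrix.diagonal_mul_diagonal]
    rw [show (fun i => w i * (w i)⁻¹) = fun _ => (1:ℝ) from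
      funext fun i => mul_inv_cancel₀ (hw i).ne', Matrix.diagonal_one]
  -- the key computation
  have key : ∀ β : Fin p → ℝ, L (fun i => a * w i * β i) = f β := by
    intro β
    have hmv : Xt.mulVec (fun i => a * w i * β i) =
        Sum.elim (fun j => Real.sqrt (2 * n) * (X.mulVec β) j)
          (fun i => Real.sqrt (2 * n) * (Real.sqrt lam2 * (R.mulVec β) i)) := by
      have hdv : (Matrix.diagonal w)⁻¹.mulVec (fun i => a * w i * β i) = a • β := by
        funext i
        rw [hDinv]
        rw [Matrix.mulVec_diagonal]
        field_simp [(hw i).ne']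
        simp [Pi.smul_apply, smul_eq_mul]
      rw [hXt, Matrix.smul_mulVec, Matrix.fromRows_mulVec]
      funext k
      cases k with
      | inl j =>
        simp only [Pi.smul_apply, Sum.elim_inl, ← Matrix.mulVec_mulVec, hdv,
          Matrix.mulVec_smul, Pi.smul_apply, smul_eq_mul]
        field_simp
      | inr i =>
        simp only [Pi.smul_apply, Sum.elim_inr, Matrix.smul_mulVec,
          ← Matrix.mulVec_mulVec, hdv, Matrix.mulVec_smul, Pi.smul_apply, smul_eq_mul]
        field_simp
        try ring
    rw [hL, hf, hmv, hYt, Fintype.sum_sum_type]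
    have h1 : ∀ j : Fin n,
        (Sum.elim (fun j => Real.sqrt (2*n) * Y j) (0 : Fin p → ℝ) (Sum.inl j) -
          Sum.elim (fun j => Real.sqrt (2 * n) * (X.mulVec β) j)
            (fun i => Real.sqrt (2 * n) * (Real.sqrt lam2 * (R.mulVec β) i)) (Sum.inl j)) ^ 2
        = (2 * n) * (Y j - (X.mulVec β) j) ^ 2 := by
      intro j
      simp only [Sum.elim_inl]
      rw [← mul_sub, mul_pow, hs2n]
    have h2 : ∀ i : Fin p,
        (Sum.elim (fun j => Real.sqrt (2*n) * Y j) (0 : Fin p → ℝ) (Sum.inr i) -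
          Sum.elim (fun j => Real.sqrt (2 * n) * (X.mulVec β) j)
            (fun i => Real.sqrt (2 * n) * (Real.sqrt lam2 * (R.mulVec β) i)) (Sum.inr i)) ^ 2
        = (2 * n) * (lam2 * (R.mulVec β) i ^ 2) := by
      intro i
      simp only [Sum.elim_inr, Pi.zero_apply, zero_sub, neg_sq, mul_pow, hs2n,
        Real.sq_sqrt hlam2]
      try ring
    rw [Finset.sum_congr rfl fun j _ => h1 j, Finset.sum_congr rfl fun i _ => h2 i]
    have hquad : ∑ i, (R.mulVec β) i ^ 2 = ∑ i, β i * (Sig.mulVec β) i := by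
      have : (R.mulVec β) ⬝ᵥ (R.mulVec β) = β ⬝ᵥ (Sig.mulVec β) := by
        rw [Matrix.dotProduct_mulVec, Matrix.vecMul_mulVec, hRsym.eq, hRR,
          ← Matrix.dotProduct_mulVec]
      simpa [dotProduct, sq] using this
    have habs : ∑ i, |a * w i * β i| = a * ∑ i, w i * |β i| := by
      rw [Finset.mul_sum]
      refine Finset.sum_congr rfl fun i _ => ?_
      rw [abs_mul, abs_mul, abs_of_pos ha, abs_of_pos (hw i)]
      ring
    rw [habs, hlam]
    simp only [← Finset.mul_sum]
    rw [hquad]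
    field_simp
    ring
  -- membership transfer
  have hmem : ∀ β : Fin p → ℝ, β ∈ S ↔ (fun i => a * w i * β i) ∈ St := by
    intro β
    rw [hS, hSt]
    simp only [Set.mem_setOf_eq, Set.mem_Icc]
    constructor
    · intro h i
      have haw : 0 < a * w i := mul_pos ha (hw i)
      constructor
      · rw [mul_assoc, mul_assoc]
        exact mul_le_mul_of_nonneg_left (mul_le_mul_of_nonneg_left (h i).1 (hw i).le) ha.le
      · rw [mul_assoc, mul_assoc]
        exact mul_le_mul_of_nonneg_left (mul_le_mul_of_nonneg_left (h i).2 (hw i).le) ha.le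
    · intro h i
      have haw : 0 < a * w i := mul_pos ha (hw i)
      have h1 := (h i).1
      have h2 := (h i).2
      rw [mul_assoc] at h1 h2
      rw [mul_assoc] at h1 h2
      constructor
      · exact le_of_mul_le_mul_left (le_of_mul_le_mul_left h1 ha) (hw i)
      · exact le_of_mul_le_mul_left (le_of_mul_le_mul_left h2 ha) (hw i)
  -- surjectivity onto St
  have hsurj : ∀ γ ∈ St, ∃ β ∈ S, (fun i => a * w i * β i) = γ := by
    intro γ hγ
    refine ⟨fun i => γ i / (a * w i), ?_, ?_⟩
    · rw [(hmem _)]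
      convert hγ using 1
      funext i
      field_simp [ha.ne', (hw i).ne']
    · funext i
      field_simp [ha.ne', (hw i).ne']
  intro βhat hβhat
  constructor
  · intro hmin
    rw [isMinOn_iff] at hmin ⊢
    intro γ hγ
    obtain ⟨β, hβS, hβγ⟩ := hsurj γ hγ
    rw [key βhat, ← hβγ, key β]
    exact hmin β hβS
  · intro hmin
    rw [isMinOn_iff] at hmin ⊢
    intro β hβ
    have := hmin (fun i => a * w i * β i) ((hmem β).mp hβ)
    rwa [key βhat, key β] at this
end
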